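/- arXiv:2006.04933 — 3 statements merged into one kernel-verified Lean document; each statement's English description precedes it below -/
import Mathlib

section
/- Let G = (V, E) be a finite 3-regular connected simple graph that has a Hamiltonian cycle, and let G' be the graph obtained from G by adding one new vertex in the middle of each edge: the vertex set of G' is V ⊔ E, and for each edge e = {u, v} of G, G' has the two edges {u, e} and {v, e}. Then there exist two GTSP tours χ¹ and χ² on G' — where a GTSP tour on G' is a function from the edges of G' to ℕ such that every vertex of G' has even positive degree and the subgraph of edges with positive value is connected and spans all vertices of G' — such that (1/2)χ¹ + (1/2)χ² assigns the value 1 to every edge of G'. -/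
open scoped Classical

/-- The subdivision `G'` of a graph `G`: one new vertex is added in the middle of each
edge, so the vertex set is `V ⊕ G.edgeSet`, and each edge `e = {u, v}` of `G` is
replaced by the two edges `{u, e}` and `{v, e}`. -/
def subdivision {V : Type*} (G : SimpleGraph V) : SimpleGraph (V ⊕ G.edgeSet) where
  Adj x y :=
    match x, y with
    | Sum.inl u, Sum.inr e => u ∈ (e : Sym2 V)
    | Sum.inr e, Sum.inl u => u ∈ (e : Sym2 V)
    | _, _ => False
  symm := ⟨by rintro (u | e) (w | f) h <;> exact h⟩
  loopless := ⟨by rintro (u | e) h <;> exact h⟩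

/-- A GTSP tour on a finite graph `G`: a natural-number edge-multiplicity vector,
supported on the edges of `G`, with even positive degree at every vertex, whose
support is connected and spans all the vertices. -/
noncomputable def IsGTSPTour {V : Type*} [Fintype V]
    (G : SimpleGraph V) (x : Sym2 V → ℕ) : Prop :=
  (∀ e, e ∉ G.edgeSet → x e = 0) ∧
    (∀ v : V, Even (∑ e ∈ G.incidenceFinset v, x e) ∧
      0 < ∑ e ∈ G.incidenceFinset v, x e) ∧
    (SimpleGraph.fromEdgeSet {e : Sym2 V | e ∈ G.edgeSet ∧ 0 < x e}).Connected

section Aux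

lemma mem_out_or {α : Type*} {z : Sym2 α} {u : α} (h : u ∈ z) : u = z.out.1 ∨ u = z.out.2 := by
  rw [(z.out_eq).symm, Sym2.mem_iff] at h; exact h

variable {V : Type*} [Fintype V] [DecidableEq V] (G : SimpleGraph V) [DecidableRel G.Adj]

/-- Weight of the half-edge at `u` inside the subdivided edge `e`, where `c` is the
list of edges of the Hamiltonian cycle and `k ∈ {0, 2}` selects which of the two
tours we are building. -/
noncomputable def wt (c : List (Sym2 V)) (k : ℕ) (u : V) (e : G.edgeSet) : ℕ :=
  if (e : Sym2 V) ∈ c then 1 else if u = (e : Sym2 V).out.1 then k else 2 - k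

/-- The candidate GTSP tour as an edge-multiplicity vector on the subdivision. -/
noncomputable def chi (c : List (Sym2 V)) (k : ℕ) : Sym2 (V ⊕ G.edgeSet) → ℕ :=
  Sym2.lift ⟨fun x y => match x, y with
    | Sum.inl u, Sum.inr e => if u ∈ (e : Sym2 V) then wt G c k u e else 0
    | Sum.inr e, Sum.inl u => if u ∈ (e : Sym2 V) then wt G c k u e else 0
    | _, _ => 0,
    by rintro (u | e) (u' | e') <;> rfl⟩

lemma chi_mk (c : List (Sym2 V)) (k : ℕ) (u : V) (e : G.edgeSet) :
    chi G c k s(Sum.inl u, Sum.inr e) = if u ∈ (e : Sym2 V) then wt G c k u e else 0 := rfl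

lemma chi_mk' (c : List (Sym2 V)) (k : ℕ) (u : V) (e : G.edgeSet) :
    chi G c k s(Sum.inr e, Sum.inl u) = if u ∈ (e : Sym2 V) then wt G c k u e else 0 := rfl

lemma countP_edges_parity (v : V) {a b : V} (q : G.Walk a b) :
    (q.edges.countP (fun e => decide (v ∈ e))) % 2
      = ((if v = a then 1 else 0) + (if v = b then 1 else 0)) % 2 := by
  induction q with
  | nil => simp; split_ifs <;> rfl
  | @cons a x b h q ih =>
    rw [SimpleGraph.Walk.edges_cons, List.countP_cons]
    have hax : a ≠ x := h.ne
    by_cases hva : v = a <;> by_cases hvx : v = x <;>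
      simp_all [Sym2.mem_iff] <;> omega

lemma exists_edge_mem (v : V) : ∀ {a b : V} (q : G.Walk a b), ¬ q.Nil → v ∈ q.support →
    ∃ f ∈ q.edges, v ∈ f := by
  intro a b q
  induction q with
  | nil => intro h; exact absurd SimpleGraph.Walk.Nil.nil h
  | @cons a x b h q ih =>
    intro _ hv
    rw [SimpleGraph.Walk.support_cons, List.mem_cons] at hv
    rcases hv with rfl | hv
    · exact ⟨s(v, x), by simp, by simp⟩
    · by_cases hq : q.Nil
      · have hvx : v = x := by
          cases q with
          | nil => simpa using hv
          | cons h' q' => exact absurd hq SimpleGraph.Walk.not_nil_cons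
        subst hvx
        exact ⟨s(a, v), by simp, by simp⟩
      · obtain ⟨f, hf, hvf⟩ := ih hq hv
        exact ⟨f, by simp [hf], hvf⟩

lemma inc_inl (v : V) [Fintype ((subdivision G).neighborSet (Sum.inl v))]
    [DecidableEq (V ⊕ G.edgeSet)] :
    (subdivision G).incidenceFinset (Sum.inl v) =
      (Finset.univ.filter (fun e : G.edgeSet => v ∈ (e : Sym2 V))).image
        (fun e => s(Sum.inl v, Sum.inr e)) := by
  ext f
  rw [SimpleGraph.mem_incidenceFinset]
  simp only [Finset.mem_image, Finset.mem_filter, Finset.mem_univ, true_and]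
  constructor
  · rintro ⟨hf, hvf⟩
    induction f with
    | _ x y =>
      rw [SimpleGraph.mem_edgeSet] at hf
      match x, y, hf with
      | Sum.inl u, Sum.inr e, hf =>
        have : (Sum.inl v : V ⊕ G.edgeSet) = Sum.inl u := by
          rcases Sym2.mem_iff.1 hvf with h | h
          · exact h
          · exact absurd h (by simp)
        obtain rfl : v = u := by injection this
        exact ⟨e, hf, rfl⟩
      | Sum.inr e, Sum.inl u, hf =>
        have : (Sum.inl v : V ⊕ G.edgeSet) = Sum.inl u := by
          rcases Sym2.mem_iff.1 hvf with h | h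
          · exact absurd h (by simp)
          · exact h
        obtain rfl : v = u := by injection this
        exact ⟨e, hf, Sym2.eq_swap⟩
  · rintro ⟨e, he, rfl⟩
    exact ⟨(SimpleGraph.mem_edgeSet _).2 he, by simp⟩

lemma inc_inr (e : G.edgeSet) [Fintype ((subdivision G).neighborSet (Sum.inr e))]
    [DecidableEq (V ⊕ G.edgeSet)] :
    (subdivision G).incidenceFinset (Sum.inr e) =
      {s(Sum.inl (e : Sym2 V).out.1, Sum.inr e), s(Sum.inl (e : Sym2 V).out.2, Sum.inr e)} := by
  ext f
  rw [SimpleGraph.mem_incidenceFinset]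
  simp only [Finset.mem_insert, Finset.mem_singleton]
  constructor
  · rintro ⟨hf, hef⟩
    induction f with
    | _ x y =>
      rw [SimpleGraph.mem_edgeSet] at hf
      match x, y, hf with
      | Sum.inl u, Sum.inr e', hf =>
        have : (Sum.inr e : V ⊕ G.edgeSet) = Sum.inr e' := by
          rcases Sym2.mem_iff.1 hef with h | h
          · exact absurd h (by simp)
          · exact h
        obtain rfl : e = e' := by injection this
        have hu : u ∈ (e : Sym2 V) := hf
        rcases mem_out_or hu with h | h
        · exact Or.inl (by rw [h])
        · exact Or.inr (by rw [h])
      | Sum.inr e', Sum.inl u, hf =>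
        have : (Sum.inr e : V ⊕ G.edgeSet) = Sum.inr e' := by
          rcases Sym2.mem_iff.1 hef with h | h
          · exact h
          · exact absurd h (by simp)
        obtain rfl : e = e' := by injection this
        have hu : u ∈ (e : Sym2 V) := hf
        rcases mem_out_or hu with h | h
        · exact Or.inl (by rw [h, Sym2.eq_swap])
        · exact Or.inr (by rw [h, Sym2.eq_swap])
  · rintro (rfl | rfl)
    · exact ⟨(SimpleGraph.mem_edgeSet _).2 (Sym2.out_fst_mem _), by simp⟩
    · exact ⟨(SimpleGraph.mem_edgeSet _).2 (Sym2.out_snd_mem _), by simp⟩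

lemma hout_ne' (e : G.edgeSet) : (e : Sym2 V).out.1 ≠ (e : Sym2 V).out.2 := by
  intro h
  exact G.not_isDiag_of_mem_edgeSet e.2
    (by rw [((e : Sym2 V).out_eq).symm]; exact Sym2.mk_isDiag_iff.2 h)

lemma deg_inl {v₀ : V} (p : G.Walk v₀ v₀) (hp : p.IsHamiltonianCycle) {k : ℕ}
    (hk : k = 0 ∨ k = 2) (v : V) [Fintype ((subdivision G).neighborSet (Sum.inl v))]
    [DecidableEq (V ⊕ G.edgeSet)] :
    Even (∑ f ∈ (subdivision G).incidenceFinset (Sum.inl v), chi G p.edges k f) ∧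
      0 < ∑ f ∈ (subdivision G).incidenceFinset (Sum.inl v), chi G p.edges k f := by
  set c := p.edges with hc
  have hinj : ∀ x ∈ Finset.univ.filter (fun e : G.edgeSet => v ∈ (e : Sym2 V)),
      ∀ y ∈ Finset.univ.filter (fun e : G.edgeSet => v ∈ (e : Sym2 V)),
      s(Sum.inl v, Sum.inr x) = s(Sum.inl v, Sum.inr y) → x = y := by
    intro x _ y _ h
    rcases Sym2.eq_iff.1 h with ⟨_, h2⟩ | ⟨h1, _⟩
    · injection h2
    · exact absurd h1 (by simp)
  rw [inc_inl, Finset.sum_image hinj,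
    Finset.sum_congr rfl (fun (e : G.edgeSet) he =>
      (by rw [chi_mk, if_pos (Finset.mem_filter.1 he).2] :
        chi G c k s(Sum.inl v, Sum.inr e) = wt G c k v e))]
  set F := Finset.univ.filter (fun e : G.edgeSet => v ∈ (e : Sym2 V)) with hF
  constructor
  · -- even
    have hsplit : ∑ e ∈ F, wt G c k v e
        = (F.filter (fun e : G.edgeSet => (e : Sym2 V) ∈ c)).card
          + ∑ e ∈ F, (if (e : Sym2 V) ∈ c then 0 else wt G c k v e) := by
      conv_rhs => rw [Finset.card_eq_sum_ones, Finset.sum_filter]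
      rw [← Finset.sum_add_distrib]
      refine Finset.sum_congr rfl fun e _ => ?_
      by_cases h : (e : Sym2 V) ∈ c <;> simp [wt, h]
    rw [hsplit]
    refine Even.add ?_ ?_
    · -- the number of cycle edges at `v` is even
      have hcard : (F.filter (fun e : G.edgeSet => (e : Sym2 V) ∈ c)).card
          = (c.toFinset.filter (fun f => v ∈ f)).card := by
        refine Finset.card_bij (fun (e : G.edgeSet) (_ : e ∈ F.filter (fun e : G.edgeSet => (e : Sym2 V) ∈ c)) => (e : Sym2 V)) ?_ ?_ ?_
        · intro e he
          rw [Finset.mem_filter] at he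
          obtain ⟨heF, hec⟩ := he
          rw [hF, Finset.mem_filter] at heF
          exact Finset.mem_filter.2 ⟨List.mem_toFinset.2 hec, heF.2⟩
        · intro e1 _ e2 _ h
          exact Subtype.ext h
        · intro f hf
          rw [Finset.mem_filter, List.mem_toFinset] at hf
          refine ⟨⟨f, SimpleGraph.Walk.edges_subset_edgeSet p hf.1⟩, ?_, rfl⟩
          rw [Finset.mem_filter]
          refine ⟨?_, hf.1⟩
          rw [hF, Finset.mem_filter]
          exact ⟨Finset.mem_univ _, hf.2⟩
      rw [hcard]
      have hfin : c.toFinset.filter (fun f => v ∈ f)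
          = (c.filter (fun f => decide (v ∈ f))).toFinset := by
        ext f
        simp [List.mem_filter]
      rw [hfin, List.toFinset_card_of_nodup
        ((hp.isCycle.isCircuit.isTrail.edges_nodup).filter _),
        ← List.countP_eq_length_filter]
      rw [Nat.even_iff]
      have hpar := countP_edges_parity G v p
      rw [← hc] at hpar
      rw [hpar]
      split_ifs <;> rfl
    · refine even_iff_two_dvd.2 (Finset.dvd_sum fun e _ => ?_)
      by_cases h : (e : Sym2 V) ∈ c
      · simp [h]
      · rcases hk with rfl | rfl <;> simp [h, wt] <;> split_ifs <;> norm_num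
  · -- positive
    obtain ⟨f, hf, hvf⟩ := exists_edge_mem G v p hp.isCycle.not_nil (hp.mem_support v)
    refine Finset.sum_pos' (fun i _ => Nat.zero_le _)
      ⟨⟨f, SimpleGraph.Walk.edges_subset_edgeSet p hf⟩, ?_, ?_⟩
    · rw [hF, Finset.mem_filter]
      exact ⟨Finset.mem_univ _, hvf⟩
    · simp [wt, hc, hf]

lemma deg_inr (c : List (Sym2 V)) {k : ℕ} (hk : k = 0 ∨ k = 2) (e : G.edgeSet)
    [Fintype ((subdivision G).neighborSet (Sum.inr e))] [DecidableEq (V ⊕ G.edgeSet)] :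
    Even (∑ f ∈ (subdivision G).incidenceFinset (Sum.inr e), chi G c k f) ∧
      0 < ∑ f ∈ (subdivision G).incidenceFinset (Sum.inr e), chi G c k f := by
  have hne : s(Sum.inl (e : Sym2 V).out.1, (Sum.inr e : V ⊕ G.edgeSet))
      ≠ s(Sum.inl (e : Sym2 V).out.2, Sum.inr e) := by
    intro h
    rcases Sym2.eq_iff.1 h with ⟨h1, _⟩ | ⟨h1, _⟩
    · exact hout_ne' G e (by injection h1)
    · exact absurd h1 (by simp)
  rw [inc_inr, Finset.sum_pair hne, chi_mk, chi_mk,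
    if_pos (Sym2.out_fst_mem _), if_pos (Sym2.out_snd_mem _)]
  have h2 : wt G c k (e : Sym2 V).out.1 e + wt G c k (e : Sym2 V).out.2 e = 2 := by
    by_cases hec : (e : Sym2 V) ∈ c
    · simp [wt, hec]
    · have hne12 := hout_ne' G e
      rcases hk with rfl | rfl <;> simp [wt, hec, hne12, hne12.symm]
  rw [h2]
  exact ⟨⟨1, rfl⟩, two_pos⟩

lemma tour {v₀ : V} {p : G.Walk v₀ v₀} (hp : p.IsHamiltonianCycle) {k : ℕ}
    (hk : k = 0 ∨ k = 2) : IsGTSPTour (subdivision G) (chi G p.edges k) := by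
  set c := p.edges with hc
  refine ⟨?_, ?_, ?_⟩
  · -- support condition
    intro f
    induction f with
    | _ x y =>
      intro hf
      match x, y with
      | Sum.inl u, Sum.inl u' => rfl
      | Sum.inr e, Sum.inr e' => rfl
      | Sum.inl u, Sum.inr e =>
        have hu : u ∉ (e : Sym2 V) := fun h => hf ((SimpleGraph.mem_edgeSet _).2 h)
        exact if_neg hu
      | Sum.inr e, Sum.inl u =>
        have hu : u ∉ (e : Sym2 V) := fun h => hf ((SimpleGraph.mem_edgeSet _).2 h)
        exact if_neg hu
  · -- degree conditions
    rintro (v | e)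
    · exact deg_inl G p hp hk v
    · exact deg_inr G c hk e
  · -- connectivity
    rw [SimpleGraph.connected_iff]
    set SG := SimpleGraph.fromEdgeSet
      {f : Sym2 (V ⊕ G.edgeSet) | f ∈ (subdivision G).edgeSet ∧ 0 < chi G c k f} with hSG
    have adj : ∀ (u : V) (e : G.edgeSet), u ∈ (e : Sym2 V) → 0 < wt G c k u e →
        SG.Adj (Sum.inl u) (Sum.inr e) := by
      intro u e hu hw
      rw [hSG, SimpleGraph.fromEdgeSet_adj]
      refine ⟨⟨(SimpleGraph.mem_edgeSet _).2 hu, ?_⟩, by simp⟩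
      rw [chi_mk, if_pos hu]
      exact hw
    have reach : ∀ {a b : V} (q : G.Walk a b), (∀ f ∈ q.edges, f ∈ c) →
        SG.Reachable (Sum.inl a) (Sum.inl b) := by
      intro a b q
      induction q with
      | nil => exact fun _ => SimpleGraph.Reachable.refl _
      | @cons a x b h q ih =>
        intro hsub
        have hmem : s(a, x) ∈ c := hsub _ (by simp)
        have h1 := adj a ⟨s(a, x), h⟩ (by simp) (by simp [wt, hmem])
        have h2 := adj x ⟨s(a, x), h⟩ (by simp) (by simp [wt, hmem])
        exact (h1.reachable.trans h2.reachable.symm).trans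
          (ih fun f hf => hsub f (by simp [hf]))
    have keyV : ∀ u : V, SG.Reachable (Sum.inl u) (Sum.inl v₀) := fun u =>
      (reach (p.takeUntil u (hp.mem_support u))
        (fun f hf => SimpleGraph.Walk.edges_takeUntil_subset _ _ hf)).symm
    have keyE : ∀ e : G.edgeSet, SG.Reachable (Sum.inr e) (Sum.inl v₀) := by
      intro e
      obtain ⟨u, hu, hw⟩ : ∃ u, u ∈ (e : Sym2 V) ∧ 0 < wt G c k u e := by
        by_cases hec : (e : Sym2 V) ∈ c
        · exact ⟨_, Sym2.out_fst_mem _, by simp [wt, hec]⟩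
        · rcases hk with rfl | rfl
          · exact ⟨_, Sym2.out_snd_mem _, by simp [wt, hec, (hout_ne' G e).symm]⟩
          · exact ⟨_, Sym2.out_fst_mem _, by simp [wt, hec]⟩
      exact ((adj u e hu hw).symm.reachable).trans (keyV u)
    refine ⟨?_, ⟨Sum.inl v₀⟩⟩
    intro x y
    have key : ∀ z : V ⊕ G.edgeSet, SG.Reachable z (Sum.inl v₀) := by
      rintro (u | e)
      exacts [keyV u, keyE e]
    exact (key x).trans (key y).symm

end Aux

/-- if a finite 3-regular connected simple graph `G` has a Hamiltonian
cycle, then there are two GTSP tours `χ¹, χ²` on the subdivision `G'` of `G` whose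
average `(1/2)χ¹ + (1/2)χ²` assigns the value 1 to every edge of `G'`. -/
theorem hamiltonian_gives_two_tours_averaging_to_one {V : Type*} [Fintype V] [DecidableEq V]
    (G : SimpleGraph V) [DecidableRel G.Adj]
    (hreg : ∀ v : V, G.degree v = 3) (hconn : G.Connected)
    (hham : ∃ (v : V) (p : G.Walk v v), p.IsHamiltonianCycle) :
    ∃ χ₁ χ₂ : Sym2 (V ⊕ G.edgeSet) → ℕ,
      IsGTSPTour (subdivision G) χ₁ ∧ IsGTSPTour (subdivision G) χ₂ ∧
        ∀ e ∈ (subdivision G).edgeSet, (χ₁ e : ℝ) / 2 + (χ₂ e : ℝ) / 2 = 1 := by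
  obtain ⟨v₀, p, hp⟩ := hham
  refine ⟨chi G p.edges 2, chi G p.edges 0, tour G hp (Or.inr rfl), tour G hp (Or.inl rfl), ?_⟩
  have h2 : ∀ f ∈ (subdivision G).edgeSet, chi G p.edges 2 f + chi G p.edges 0 f = 2 := by
    intro f
    induction f with
    | _ x y =>
      intro hf
      rw [SimpleGraph.mem_edgeSet] at hf
      match x, y, hf with
      | Sum.inl u, Sum.inr e, hf =>
        have hu : u ∈ (e : Sym2 V) := hf
        rw [chi_mk, chi_mk, if_pos hu, if_pos hu]
        by_cases hec : (e : Sym2 V) ∈ p.edges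
        · simp [wt, hec]
        · by_cases h1 : u = (e : Sym2 V).out.1 <;> simp [wt, hec, h1]
      | Sum.inr e, Sum.inl u, hf =>
        have hu : u ∈ (e : Sym2 V) := hf
        rw [chi_mk', chi_mk', if_pos hu, if_pos hu]
        by_cases hec : (e : Sym2 V) ∈ p.edges
        · simp [wt, hec]
        · by_cases h1 : u = (e : Sym2 V).out.1 <;> simp [wt, hec, h1]
  intro f hf
  have := h2 f hf
  have hcast : ((chi G p.edges 2 f : ℝ) + (chi G p.edges 0 f : ℝ)) = 2 := by
    exact_mod_cast congrArg (Nat.cast : ℕ → ℝ) this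
  linarith
end

section
/- Let G = (V, E) be a finite 3-regular connected simple graph, and let G' be the graph obtained from G by adding one new vertex in the middle of each edge: the vertex set of G' is V ⊔ E, and for each edge e = {u, v} of G, G' has the two edges {u, e} and {v, e}. Suppose the all-ones vector on the edges of G' can be written as ∑_k λ_k χ^k, where the λ_k > 0 are real numbers summing to 1 and each χ^k is a GTSP tour on G' — a function from the edges of G' to ℕ such that every vertex of G' has even positive degree and the subgraph of edges with positive value is connected and spans all vertices of G'. Then G has a Hamiltonian cycle. -/
open scoped Classical

namespace GTSPAux
open SimpleGraph Walk
variable {V : Type*} {H : SimpleGraph V}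

lemma exists_two_neighbors {u : V} (q : H.Walk u u) (hq : q.IsCycle) :
    ∃ a b, a ≠ b ∧ H.Adj u a ∧ H.Adj u b ∧ a ∈ q.support ∧ b ∈ q.support := by
  cases q with
  | nil => exact absurd rfl hq.ne_nil
  | @cons _ x _ h q' =>
    have hq' : q'.IsPath := ((Walk.cons_isCycle_iff q' h).mp hq).1
    cases hrev : q'.reverse with
    | nil => exact absurd h (H.loopless.irrefl u)
    | @cons _ b _ h'' r =>
      refine ⟨x, b, ?_, h, h'', ?_, ?_⟩
      · rintro rfl
        have hpath : (Walk.cons h'' r).IsPath := hrev ▸ hq'.reverse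
        have hr : r = Walk.nil := (Walk.isPath_iff_eq_nil (p := r)).mp hpath.of_cons
        have hlen : q'.length = 1 := by
          have := congrArg Walk.length hrev
          rw [Walk.length_reverse] at this
          simp [hr] at this
          omega
        have h3 := hq.three_le_length
        simp [hlen] at h3
      · simp [Walk.support_cons]
      · have hb : b ∈ q'.reverse.support := by rw [hrev]; simp [Walk.support_cons]
        rw [Walk.support_reverse, List.mem_reverse] at hb
        simp [Walk.support_cons, hb]

lemma closed_support [Fintype V] {v : V} {p : H.Walk v v} (hp : p.IsCycle)
    (hdeg : ∀ u, (H.neighborSet u).ncard = 2)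
    {u w : V} (hu : u ∈ p.support) (hw : H.Adj u w) : w ∈ p.support := by
  have htl : ∀ z, z ∈ (p.rotate u hu).support → z ∈ p.support := by
    intro z hz
    rw [Walk.support_eq_cons] at hz
    rcases List.mem_cons.mp hz with rfl | hz
    · exact hu
    · exact List.mem_of_mem_tail ((p.support_rotate u hu).mem_iff.mp hz)
  obtain ⟨a, b, hab, hua, hub, ha, hb⟩ := exists_two_neighbors (p.rotate u hu) (hp.rotate hu)
  have hsub : ({a, b} : Set V) ⊆ H.neighborSet u := by
    rintro z (rfl | rfl)
    · exact hua
    · exact hub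
  have heq : ({a, b} : Set V) = H.neighborSet u := by
    apply Set.eq_of_subset_of_ncard_le hsub
    rw [hdeg u, Set.ncard_pair hab]
  have hwmem : w ∈ ({a, b} : Set V) := heq ▸ hw
  rcases hwmem with rfl | rfl
  · exact htl _ ha
  · exact htl _ hb

lemma two_regular_hamiltonian {V : Type*} [Fintype V] [DecidableEq V] (H : SimpleGraph V)
    (hconn : H.Connected) (hdeg : ∀ u, (H.neighborSet u).ncard = 2) :
    ∃ (v : V) (p : H.Walk v v), p.IsHamiltonianCycle := by
  classical
  have hV : Nonempty V := hconn.nonempty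
  have hdeg' : ∀ u, H.degree u = 2 := by
    intro u
    have h2 := hdeg u
    rw [Set.ncard_eq_toFinset_card'] at h2
    rw [← card_neighborFinset_eq_degree, ← h2]
    congr 1
  have hnac : ¬ H.IsAcyclic := by
    intro hac
    have htree : H.IsTree := ⟨hconn, hac⟩
    have h1 := htree.card_edgeFinset
    have h2 := H.sum_degrees_eq_twice_card_edges
    rw [Finset.sum_congr rfl (fun u _ => hdeg' u), Finset.sum_const, Finset.card_univ,
      smul_eq_mul] at h2
    have hcard : 1 ≤ Fintype.card V := Fintype.card_pos
    omega
  rw [SimpleGraph.IsAcyclic] at hnac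
  push_neg at hnac
  obtain ⟨v, c, hc⟩ := hnac
  have hmem : ∀ w, w ∈ c.support := by
    have key : ∀ {a b : V} (q : H.Walk a b), a ∈ c.support → b ∈ c.support := by
      intro a b q
      induction q with
      | nil => exact id
      | cons had q ih => exact fun ha => ih (closed_support hc hdeg ha had)
    intro w
    exact (hconn v w).elim fun q => key q c.start_mem_support
  refine ⟨v, c, ?_⟩
  rw [Walk.isHamiltonianCycle_iff_isCycle_and_support_count_tail_eq_one]
  refine ⟨hc, fun a => ?_⟩
  have hnd : c.support.tail.Nodup := hc.support_nodup
  have hat : a ∈ c.support.tail := by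
    have hms := hmem a
    rw [c.support_eq_cons] at hms
    rcases List.mem_cons.mp hms with rfl | hmt
    · rw [← Walk.support_tail_of_not_nil c hc.not_nil]
      exact c.tail.end_mem_support
    · exact hmt
  exact List.count_eq_one_of_mem hnd hat

end GTSPAux

/-- if the all-ones vector on the edges of the subdivision `G'` of a
finite 3-regular connected simple graph `G` is a convex combination (with positive
weights) of GTSP tours on `G'`, then `G` has a Hamiltonian cycle. -/
theorem all_ones_convex_combination_gives_hamiltonian {V : Type*} [Fintype V] [DecidableEq V]
    (G : SimpleGraph V) [DecidableRel G.Adj]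
    (hreg : ∀ v : V, G.degree v = 3) (hconn : G.Connected)
    {ι : Type*} [Fintype ι]
    (lam : ι → ℝ) (χ : ι → Sym2 (V ⊕ G.edgeSet) → ℕ)
    (hlam : ∀ k, 0 < lam k) (hsum : ∑ k, lam k = 1)
    (hχ : ∀ k, IsGTSPTour (subdivision G) (χ k))
    (hone : ∀ e ∈ (subdivision G).edgeSet, ∑ k, lam k * (χ k e : ℝ) = 1) :
    ∃ (v : V) (p : G.Walk v v), p.IsHamiltonianCycle := by
  classical
  -- `ι` is nonempty
  have hι : Nonempty ι := by
    by_contra h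
    rw [not_nonempty_iff] at h
    rw [Finset.univ_eq_empty, Finset.sum_empty] at hsum
    exact zero_ne_one hsum
  obtain ⟨k0⟩ := hι
  obtain ⟨hsupp, hdegS, hconnS⟩ := hχ k0
  set x : Sym2 (V ⊕ G.edgeSet) → ℕ := χ k0 with hxdef
  -- shape of the edges of the subdivision
  have hshape : ∀ g ∈ (subdivision G).edgeSet,
      ∃ (u : V) (f : G.edgeSet), g = s(Sum.inl u, Sum.inr f) ∧ u ∈ f.val := by
    intro g hg
    induction g using Sym2.ind with
    | _ c d =>
      rw [SimpleGraph.mem_edgeSet] at hg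
      match c, d with
      | Sum.inl u, Sum.inr f => exact ⟨u, f, rfl, hg⟩
      | Sum.inr f, Sum.inl u => exact ⟨u, f, Sym2.eq_swap.symm, hg⟩
      | Sum.inl _, Sum.inl _ => exact hg.elim
      | Sum.inr _, Sum.inr _ => exact hg.elim
  have hedge : ∀ (u : V) (f : G.edgeSet), u ∈ f.val →
      s(Sum.inl u, Sum.inr f) ∈ (subdivision G).edgeSet := by
    intro u f hu
    rw [SimpleGraph.mem_edgeSet]
    exact hu
  -- incidence sum at a subdivision vertex
  have hinc : ∀ (y : Sym2 (V ⊕ G.edgeSet) → ℕ) (u v : V) (f : G.edgeSet), f.val = s(u, v) →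
      ∀ (instN : Fintype ((subdivision G).neighborSet (Sum.inr f)))
        (instD : DecidableEq (V ⊕ G.edgeSet)),
      (∑ e ∈ @SimpleGraph.incidenceFinset _ (subdivision G) (Sum.inr f) instN instD, y e)
        = y s(Sum.inl u, Sum.inr f) + y s(Sum.inl v, Sum.inr f) := by
    intro y u v f hf instN instD
    have hadj : G.Adj u v := by
      rw [← SimpleGraph.mem_edgeSet, ← hf]; exact f.2
    have hne : s(Sum.inl u, Sum.inr f) ≠ (s(Sum.inl v, Sum.inr f) : Sym2 (V ⊕ G.edgeSet)) := by
      simp [Sym2.eq_iff, hadj.ne]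
    have hFeq : (@SimpleGraph.incidenceFinset _ (subdivision G) (Sum.inr f) instN instD)
        = {s(Sum.inl u, Sum.inr f), s(Sum.inl v, Sum.inr f)} := by
      ext g
      simp only [SimpleGraph.mem_incidenceFinset, Finset.mem_insert, Finset.mem_singleton]
      constructor
      · rintro ⟨hg, hmem⟩
        obtain ⟨w, f', rfl, hwf⟩ := hshape g hg
        rcases Sym2.mem_iff.mp hmem with h | h
        · exact absurd h (by simp)
        · have hff : f' = f := (Sum.inr.inj h).symm
          subst hff
          rw [hf] at hwf
          rcases Sym2.mem_iff.mp hwf with rfl | rfl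
          · left; rfl
          · right; rfl
      · have hu : u ∈ f.val := by rw [hf]; exact Sym2.mem_mk_left u v
        have hv : v ∈ f.val := by rw [hf]; exact Sym2.mem_mk_right u v
        rintro (rfl | rfl)
        · exact ⟨hedge u f hu, Sym2.mem_mk_right _ _⟩
        · exact ⟨hedge v f hv, Sym2.mem_mk_right _ _⟩
    rw [hFeq]
    exact Finset.sum_pair hne
  -- every tour has degree exactly two at each subdivision vertex
  have hdeg2 : ∀ (k : ι) (u v : V) (f : G.edgeSet), f.val = s(u, v) →
      χ k s(Sum.inl u, Sum.inr f) + χ k s(Sum.inl v, Sum.inr f) = 2 := by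
    intro k u v f hf
    have hadj : G.Adj u v := by
      rw [← SimpleGraph.mem_edgeSet, ← hf]; exact f.2
    have huv : u ≠ v := hadj.ne
    have hu : u ∈ f.val := by rw [hf]; exact Sym2.mem_mk_left u v
    have hv : v ∈ f.val := by rw [hf]; exact Sym2.mem_mk_right u v
    have hdk : ∀ k' : ι, 2 ≤ χ k' s(Sum.inl u, Sum.inr f) + χ k' s(Sum.inl v, Sum.inr f) := by
      intro k'
      obtain ⟨-, hd, -⟩ := hχ k'
      have h2 := hd (Sum.inr f)
      rw [hinc (χ k') u v f hf _ _] at h2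
      obtain ⟨⟨m, hm⟩, hpos⟩ := h2
      omega
    have h1 := hone _ (hedge u f hu)
    have h2 := hone _ (hedge v f hv)
    have hzero : ∑ k', lam k' *
        (((χ k' s(Sum.inl u, Sum.inr f) + χ k' s(Sum.inl v, Sum.inr f) : ℕ) : ℝ) - 2) = 0 := by
      have heq : ∑ k', lam k' *
          (((χ k' s(Sum.inl u, Sum.inr f) + χ k' s(Sum.inl v, Sum.inr f) : ℕ) : ℝ) - 2)
          = (∑ k', lam k' * (χ k' s(Sum.inl u, Sum.inr f) : ℝ))
            + (∑ k', lam k' * (χ k' s(Sum.inl v, Sum.inr f) : ℝ)) - 2 * ∑ k', lam k' := by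
        rw [Finset.mul_sum, ← Finset.sum_add_distrib, ← Finset.sum_sub_distrib]
        apply Finset.sum_congr rfl
        intro k' _
        push_cast
        ring
      rw [heq, h1, h2, hsum]
      ring
    have hterm := (Finset.sum_eq_zero_iff_of_nonneg (fun k' _ => by
      have hk := hdk k'
      have h2le : (2 : ℝ)
          ≤ ((χ k' s(Sum.inl u, Sum.inr f) + χ k' s(Sum.inl v, Sum.inr f) : ℕ) : ℝ) := by
        exact_mod_cast hk
      exact mul_nonneg (hlam k').le (sub_nonneg.mpr h2le))).mp hzero k (Finset.mem_univ k)
    have hfac : (((χ k s(Sum.inl u, Sum.inr f) + χ k s(Sum.inl v, Sum.inr f) : ℕ) : ℝ) - 2) = 0 := by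
      rcases mul_eq_zero.mp hterm with h | h
      · exact absurd h (hlam k).ne'
      · exact h
    have hre : ((χ k s(Sum.inl u, Sum.inr f) + χ k s(Sum.inl v, Sum.inr f) : ℕ) : ℝ) = 2 := by
      linarith
    exact_mod_cast hre
  -- the graph of multiplicity-one edges
  let H : SimpleGraph V := {
    Adj := fun a b => a ≠ b ∧ ∃ f : G.edgeSet, f.val = s(a, b) ∧
      0 < x s(Sum.inl a, Sum.inr f) ∧ 0 < x s(Sum.inl b, Sum.inr f)
    symm := ⟨by
      rintro a b ⟨hne, f, hf, h1, h2⟩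
      exact ⟨hne.symm, f, by rw [hf]; exact Sym2.eq_swap, h2, h1⟩⟩
    loopless := ⟨fun a h => h.1 rfl⟩ }
  have hHadj : ∀ a b : V, H.Adj a b ↔ (a ≠ b ∧ ∃ f : G.edgeSet, f.val = s(a, b) ∧
      0 < x s(Sum.inl a, Sum.inr f) ∧ 0 < x s(Sum.inl b, Sum.inr f)) := fun a b => Iff.rfl
  have hHG : H ≤ G := by
    rintro a b ⟨hne, f, hf, -, -⟩
    rw [← SimpleGraph.mem_edgeSet, ← hf]
    exact f.2
  -- the support graph of the tour
  set S : SimpleGraph (V ⊕ G.edgeSet) :=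
    SimpleGraph.fromEdgeSet {e | e ∈ (subdivision G).edgeSet ∧ 0 < x e} with hSdef
  have hSadj : ∀ {c d : V ⊕ G.edgeSet}, S.Adj c d → (subdivision G).Adj c d ∧ 0 < x s(c, d) := by
    intro c d h
    rw [hSdef, SimpleGraph.fromEdgeSet_adj] at h
    exact ⟨(SimpleGraph.mem_edgeSet _).mp h.1.1, h.1.2⟩
  have hVne : Nonempty V := hconn.nonempty
  -- connectivity transfers from the support graph to `H`
  have hHconn : H.Connected := by
    rw [SimpleGraph.connected_iff]
    refine ⟨?_, hVne⟩
    intro a b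
    have hkey : ∀ {c d : V ⊕ G.edgeSet} (w : S.Walk c d) (b : V), d = Sum.inl b →
        (∀ u, c = Sum.inl u → H.Reachable u b) ∧
        (∀ f, c = Sum.inr f → ∀ u, u ∈ f.val →
          0 < x s(Sum.inl u, Sum.inr f) → H.Reachable u b) := by
      intro c d w
      induction w with
      | nil =>
        rintro b rfl
        refine ⟨fun u hu => ?_, fun f hf => by simp at hf⟩
        rw [Sum.inl.inj hu.symm]
      | @cons c c' d h w ih =>
        rintro b rfl
        obtain ⟨hadj, hpos⟩ := hSadj h
        constructor
        · rintro u rfl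
          rcases c' with u' | f
          · exact hadj.elim
          · exact (ih b rfl).2 f rfl u hadj hpos
        · rintro f rfl u hu hupos
          rcases c' with w' | f'
          · have hw' : H.Reachable w' b := (ih b rfl).1 w' rfl
            by_cases hueq : u = w'
            · rw [hueq]; exact hw'
            · have hfval : f.val = s(u, w') := (Sym2.mem_and_mem_iff hueq).mp ⟨hu, hadj⟩
              have hwpos : 0 < x s(Sum.inl w', Sum.inr f) := by
                rwa [Sym2.eq_swap] at hpos
              have hA : H.Adj u w' := ⟨hueq, f, hfval, hupos, hwpos⟩
              exact hA.reachable.trans hw'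
          · exact hadj.elim
    obtain ⟨w⟩ := hconnS.preconnected (Sum.inl a) (Sum.inl b)
    exact (hkey w b rfl).1 a rfl
  -- shape of edges incident to an original vertex
  have hIshape : ∀ (v : V) (instN : Fintype ((subdivision G).neighborSet (Sum.inl v)))
      (instD : DecidableEq (V ⊕ G.edgeSet)) (g : Sym2 (V ⊕ G.edgeSet)),
      g ∈ (@SimpleGraph.incidenceFinset _ (subdivision G) (Sum.inl v) instN instD) →
      ∃ (w : V) (f : G.edgeSet), f.val = s(v, w) ∧ g = s(Sum.inl v, Sum.inr f) := by
    intro v instN instD g hg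
    rw [SimpleGraph.mem_incidenceFinset] at hg
    obtain ⟨hg1, hg2⟩ := hg
    obtain ⟨u', f, rfl, huf⟩ := hshape g hg1
    rcases Sym2.mem_iff.mp hg2 with h | h
    · obtain rfl := Sum.inl.inj h
      exact ⟨Sym2.Mem.other huf, f, (Sym2.other_spec huf).symm, rfl⟩
    · exact absurd h (by simp)
  have hImem : ∀ (v w : V) (f : G.edgeSet), f.val = s(v, w) →
      ∀ (instN : Fintype ((subdivision G).neighborSet (Sum.inl v)))
        (instD : DecidableEq (V ⊕ G.edgeSet)),
      s(Sum.inl v, Sum.inr f)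
        ∈ @SimpleGraph.incidenceFinset _ (subdivision G) (Sum.inl v) instN instD := by
    intro v w f hf instN instD
    rw [SimpleGraph.mem_incidenceFinset]
    exact ⟨hedge v f (by rw [hf]; exact Sym2.mem_mk_left v w), Sym2.mem_mk_left _ _⟩
  -- the incidence finset at an original vertex has three elements
  have hcard3 : ∀ (v : V) (instN : Fintype ((subdivision G).neighborSet (Sum.inl v)))
      (instD : DecidableEq (V ⊕ G.edgeSet)),
      (@SimpleGraph.incidenceFinset _ (subdivision G) (Sum.inl v) instN instD).card = 3 := by
    intro v instN instD
    have hcardN : (G.neighborFinset v).card = 3 := by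
      rw [G.card_neighborFinset_eq_degree v]
      exact hreg v
    have hbij : (G.neighborFinset v).card
        = (@SimpleGraph.incidenceFinset _ (subdivision G) (Sum.inl v) instN instD).card := by
      apply Finset.card_bij (i := fun w hw => (s(Sum.inl v, Sum.inr
        (⟨s(v, w), (SimpleGraph.mem_edgeSet G).mpr ((G.mem_neighborFinset v w).mp hw)⟩ :
          G.edgeSet)) : Sym2 (V ⊕ G.edgeSet)))
      · intro w hw
        exact hImem v w _ rfl instN instD
      · intro w1 hw1 w2 hw2 hi
        have h2 := Sym2.congr_right.mp hi
        have h3 := Subtype.ext_iff.mp (Sum.inr.inj h2)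
        exact Sym2.congr_right.mp h3
      · intro g hg
        obtain ⟨w, f, hf, rfl⟩ := hIshape v instN instD g hg
        have hadj : G.Adj v w := by
          rw [← SimpleGraph.mem_edgeSet, ← hf]; exact f.2
        refine ⟨w, (G.mem_neighborFinset v w).mpr hadj, ?_⟩
        exact congrArg (fun z : G.edgeSet => (s(Sum.inl v, Sum.inr z) : Sym2 (V ⊕ G.edgeSet)))
          (Subtype.ext hf.symm)
    rw [← hbij, hcardN]
  -- every vertex has an `H`-neighbour
  have hnbr : ∀ v : V, (H.neighborSet v).Nonempty := by
    intro v
    have h3 : 0 < G.degree v := by rw [hreg v]; norm_num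
    obtain ⟨w0, hw0⟩ := (G.degree_pos_iff_exists_adj v).mp h3
    obtain ⟨q⟩ := hHconn.preconnected v w0
    cases q with
    | nil => exact absurd rfl (G.ne_of_adj hw0)
    | cons h q => exact ⟨_, h⟩
  -- `H` is two-regular
  have hstep : ∀ (v : V) (instN : Fintype ((subdivision G).neighborSet (Sum.inl v)))
      (instD : DecidableEq (V ⊕ G.edgeSet)),
      Even (∑ e ∈ @SimpleGraph.incidenceFinset _ (subdivision G) (Sum.inl v) instN instD, x e) →
      (H.neighborSet v).ncard = 2 := by
    intro v instN instD hEv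
    have hbound : ∀ g ∈ @SimpleGraph.incidenceFinset _ (subdivision G) (Sum.inl v) instN instD,
        x g ≤ 2 := by
      intro g hg
      obtain ⟨w, f, hf, rfl⟩ := hIshape v instN instD g hg
      have h2 := hdeg2 k0 v w f hf
      rw [← hxdef] at h2
      omega
    have heven1 := (Finset.even_sum_iff_even_card_odd x).mp hEv
    have hfeq : (@SimpleGraph.incidenceFinset _ (subdivision G) (Sum.inl v) instN instD).filter
          (fun g => Odd (x g))
        = (@SimpleGraph.incidenceFinset _ (subdivision G) (Sum.inl v) instN instD).filter
          (fun g => x g = 1) := by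
      apply Finset.filter_congr
      intro g hg
      have hb := hbound g hg
      constructor
      · rintro ⟨m, hm⟩; omega
      · intro h; rw [h]; exact odd_one
    rw [hfeq] at heven1
    have hncard : (H.neighborSet v).ncard
        = ((@SimpleGraph.incidenceFinset _ (subdivision G) (Sum.inl v) instN instD).filter
            (fun g => x g = 1)).card := by
      rw [Set.ncard_eq_toFinset_card']
      apply Finset.card_bij (i := fun w hw => (s(Sum.inl v, Sum.inr
        (⟨s(v, w), (SimpleGraph.mem_edgeSet G).mpr (hHG ((H.mem_neighborSet v w).mp (Set.mem_toFinset.mp hw)))⟩ :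
          G.edgeSet)) : Sym2 (V ⊕ G.edgeSet)))
      · intro w hw
        rw [Finset.mem_filter]
        have hAdj : H.Adj v w := (H.mem_neighborSet v w).mp (Set.mem_toFinset.mp hw)
        obtain ⟨hne', f, hf, h1, h2⟩ := (hHadj v w).mp hAdj
        have hfe : (⟨s(v, w), (SimpleGraph.mem_edgeSet G).mpr (hHG ((H.mem_neighborSet v w).mp (Set.mem_toFinset.mp hw)))⟩ :
            G.edgeSet) = f := Subtype.ext hf.symm
        have hsum2 := hdeg2 k0 v w f hf
        rw [← hxdef] at hsum2
        refine ⟨?_, ?_⟩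
        · rw [hfe]; exact hImem v w f hf instN instD
        · rw [hfe]; omega
      · intro w1 hw1 w2 hw2 hi
        have h2 := Sym2.congr_right.mp hi
        have h3 := Subtype.ext_iff.mp (Sum.inr.inj h2)
        exact Sym2.congr_right.mp h3
      · intro g hg
        rw [Finset.mem_filter] at hg
        obtain ⟨hgI, hg1⟩ := hg
        obtain ⟨w, f, hf, rfl⟩ := hIshape v instN instD g hgI
        have hadj : G.Adj v w := by
          rw [← SimpleGraph.mem_edgeSet, ← hf]; exact f.2
        have hsum2 := hdeg2 k0 v w f hf
        rw [← hxdef] at hsum2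
        have hAdj : H.Adj v w := (hHadj v w).mpr ⟨hadj.ne, f, hf, by omega, by omega⟩
        refine ⟨w, Set.mem_toFinset.mpr hAdj, ?_⟩
        exact congrArg (fun z : G.edgeSet => (s(Sum.inl v, Sum.inr z) : Sym2 (V ⊕ G.edgeSet)))
          (Subtype.ext hf.symm)
    have hle3 : ((@SimpleGraph.incidenceFinset _ (subdivision G) (Sum.inl v) instN instD).filter
        (fun g => x g = 1)).card ≤ 3 := by
      calc _ ≤ (@SimpleGraph.incidenceFinset _ (subdivision G) (Sum.inl v) instN instD).card :=
            Finset.card_filter_le _ _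
        _ = 3 := hcard3 v instN instD
    have hpos : 0 < (H.neighborSet v).ncard := by
      rw [Set.ncard_eq_toFinset_card']
      exact Finset.card_pos.mpr (Set.toFinset_nonempty.mpr (hnbr v))
    rw [hncard] at hpos ⊢
    obtain ⟨m, hm⟩ := heven1
    omega
  have hHdeg : ∀ v : V, (H.neighborSet v).ncard = 2 := by
    intro v
    have h := (hdegS (Sum.inl v)).1
    revert h
    exact hstep v _ _
  -- conclude
  obtain ⟨v, p, hp⟩ := GTSPAux.two_regular_hamiltonian H hHconn hHdeg
  have hbij : Function.Bijective (SimpleGraph.Hom.ofLE hHG) :=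
    ⟨fun a b h => h, fun a => ⟨a, rfl⟩⟩
  exact ⟨v, p.map (SimpleGraph.Hom.ofLE hHG), hp.map hbij⟩
end

section
/- Let G = (V, E) be a finite 3-regular connected simple graph with no Hamiltonian cycle, and let G' be the graph obtained from G by adding one new vertex in the middle of each edge: the vertex set of G' is V ⊔ E, and for each edge e = {u, v} of G, G' has the two edges {u, e} and {v, e}. Then every GTSP tour x on G' — a function from the edges of G' to ℕ such that every vertex of G' has even positive degree and the subgraph of edges with positive value is connected and spans all vertices of G' — satisfies ∑_{e'∈E(G')} x_{e'} ≥ 2|E| + 2. -/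
open scoped Classical

namespace NonHamAux

open SimpleGraph Walk

variable {V : Type*}

/- ### Part 1: a connected graph in which every vertex has exactly two neighbours
is Hamiltonian. -/

lemma start_two_nbrs {H : SimpleGraph V} {a : V} (c : H.Walk a a) (hc : c.IsCycle) :
    ∃ y z, y ≠ z ∧ c.toSubgraph.Adj a y ∧ c.toSubgraph.Adj a z := by
  cases c with
  | nil => exact absurd (by simp) hc.not_nil
  | @cons _ s _ h q =>
    have hq : ¬ q.Nil := by
      intro h'
      have h3 := hc.three_le_length
      rw [Walk.nil_iff_length_eq] at h'
      simp [Walk.length_cons, h'] at h3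
    have hqr : ¬ q.reverse.Nil := by
      rw [Walk.nil_iff_length_eq, Walk.length_reverse, ← Walk.nil_iff_length_eq]; exact hq
    obtain ⟨z, hz, r, hr⟩ := Walk.not_nil_iff.mp hqr
    refine ⟨s, z, ?_, ?_, ?_⟩
    · intro hsz
      subst hsz
      have hmem : s(a, s) ∈ q.edges := by
        have : s(a, s) ∈ q.reverse.edges := by rw [hr]; simp
        simpa [Walk.edges_reverse] using this
      have := hc.edges_nodup
      simp [Walk.edges_cons, hmem] at this
    · exact (SimpleGraph.Subgraph.sup_adj ..).mpr (Or.inl (by simp [h]))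
    · have h1 : q.reverse.toSubgraph.Adj a z := by
        rw [hr]
        exact (SimpleGraph.Subgraph.sup_adj ..).mpr (Or.inl (by simp [hz]))
      rw [Walk.toSubgraph_reverse] at h1
      exact (SimpleGraph.Subgraph.sup_adj ..).mpr (Or.inr h1)

lemma mem_two_nbrs {H : SimpleGraph V} {a v : V} (c : H.Walk a a) (hc : c.IsCycle)
    (hv : v ∈ c.support) :
    ∃ y z, y ≠ z ∧ c.toSubgraph.Adj v y ∧ c.toSubgraph.Adj v z := by
  classical
  have := start_two_nbrs (c.rotate v hv) (hc.rotate hv)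
  rwa [Walk.toSubgraph_rotate] at this

theorem two_regular_connected_ham [Fintype V] [DecidableEq V] {H : SimpleGraph V}
    (hconn : H.Connected) (hdeg : ∀ v : V, (H.neighborSet v).ncard = 2) :
    ∃ (a : V) (c : H.Walk a a), c.IsHamiltonianCycle := by
  classical
  have hV : Nonempty V := hconn.nonempty
  obtain ⟨v0⟩ := hV
  set P : ℕ → Prop := fun n => ∃ (a b : V) (p : H.Walk a b), p.IsPath ∧ p.length = n with hP
  have hP0 : P 0 := ⟨v0, v0, Walk.nil, by simp, rfl⟩
  have hPb : ∀ n, P n → n ≤ Fintype.card V := by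
    rintro n ⟨a, b, p, hp, rfl⟩
    exact le_of_lt hp.length_lt
  set N := Nat.findGreatest P (Fintype.card V) with hN
  have hPN : P N := Nat.findGreatest_spec (m := 0) (Nat.zero_le _) hP0
  have hmax : ∀ n, P n → n ≤ N := by
    intro n hn
    by_contra hlt
    exact Nat.findGreatest_is_greatest (lt_of_not_ge hlt) (hPb n hn) hn
  obtain ⟨a, b, p, hp, hlen⟩ := hPN
  have hnbr : ∀ w, H.Adj a w → w ∈ p.support := by
    intro w hw
    by_contra hws
    have : (Walk.cons hw.symm p).IsPath := (Walk.cons_isPath_iff _ _).mpr ⟨hp, hws⟩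
    have := hmax _ ⟨w, b, _, this, rfl⟩
    simp [hlen] at this
  obtain ⟨u1, u2, hu12, hnbrs⟩ := Set.ncard_eq_two.mp (hdeg a)
  have hu1 : H.Adj a u1 := by rw [← SimpleGraph.mem_neighborSet, hnbrs]; simp
  have hu2 : H.Adj a u2 := by rw [← SimpleGraph.mem_neighborSet, hnbrs]; simp
  have hpnil : ¬ p.Nil := by
    intro hnil
    have h0 : p.length = 0 := Walk.nil_iff_length_eq.mp hnil
    have : u1 ∈ p.support := hnbr u1 hu1
    have hab : a = b := by
      cases p with
      | nil => rfl
      | cons h q => simp at h0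
    subst hab
    cases p with
    | nil =>
      simp at this
      exact hu1.ne' this
    | cons h q => simp at h0
  obtain ⟨s, hs, q, hq⟩ := Walk.not_nil_iff.mp hpnil
  obtain ⟨w, hww, hws⟩ : ∃ w, H.Adj a w ∧ w ≠ s := by
    by_cases h1 : u1 = s
    · exact ⟨u2, hu2, by rintro rfl; exact hu12 h1⟩
    · exact ⟨u1, hu1, h1⟩
  have hwsup : w ∈ p.support := hnbr w hww
  set r : H.Walk w a := (p.takeUntil w hwsup).reverse with hr
  have hrpath : r.IsPath := (hp.takeUntil hwsup).reverse
  have hna : a ∉ q.support := by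
    have := hq ▸ hp
    exact ((Walk.cons_isPath_iff _ _).mp this).2
  have hedge : s(a, w) ∉ r.edges := by
    intro hmem
    rw [hr, Walk.edges_reverse, List.mem_reverse] at hmem
    have hmem' : s(a, w) ∈ p.edges := Walk.edges_takeUntil_subset _ _ hmem
    rw [hq] at hmem'
    simp only [Walk.edges_cons, List.mem_cons] at hmem'
    rcases hmem' with h1 | h2
    · rw [Sym2.eq_iff] at h1
      rcases h1 with ⟨-, h2⟩ | ⟨h1, h2⟩
      · exact hws h2
      · exact hs.ne h1
    · exact hna (Walk.fst_mem_support_of_mem_edges q h2)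
  set c : H.Walk a a := Walk.cons hww r with hc
  have hcyc : c.IsCycle := (Walk.cons_isCycle_iff _ _).mpr ⟨hrpath, hedge⟩
  have hclosed : ∀ v u, v ∈ c.support → H.Adj v u → u ∈ c.support := by
    intro v u hv hadj
    obtain ⟨y, z, hyz, hy, hz⟩ := mem_two_nbrs c hcyc hv
    have hyH : y ∈ H.neighborSet v := hy.adj_sub
    have hzH : z ∈ H.neighborSet v := hz.adj_sub
    obtain ⟨y', z', hy'z', hset⟩ := Set.ncard_eq_two.mp (hdeg v)
    have hmemu : u ∈ ({y', z'} : Set V) := hset ▸ hadj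
    have : ({y, z} : Set V) = {y', z'} := by
      rw [hset] at hyH hzH
      rcases hyH with rfl | rfl <;> rcases hzH with rfl | rfl <;> simp_all [Set.pair_comm]
    have hmemu' : u ∈ ({y, z} : Set V) := this ▸ hmemu
    rcases hmemu' with rfl | rfl
    · exact (Walk.mem_verts_toSubgraph c).mp hy.snd_mem
    · exact (Walk.mem_verts_toSubgraph c).mp hz.snd_mem
  have hspan : ∀ v, v ∈ c.support := by
    have key : ∀ (u v : V) (p' : H.Walk u v), u ∈ c.support → v ∈ c.support := by
      intro u v p'
      induction p' with
      | nil => exact id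
      | cons h q ih => intro hu; exact ih (hclosed _ _ hu h)
    intro v
    exact key a v (hconn.preconnected a v).some (Walk.start_mem_support c)
  refine ⟨a, c, ?_⟩
  rw [Walk.isHamiltonianCycle_iff_isCycle_and_support_count_tail_eq_one]
  refine ⟨hcyc, fun v => ?_⟩
  have hnodup : c.support.tail.Nodup := hcyc.support_nodup
  have hmem : v ∈ c.support.tail := by
    rcases eq_or_ne v a with rfl | hne
    · rw [← Walk.support_tail_of_not_nil c hcyc.not_nil]
      exact Walk.end_mem_support _
    · have := hspan v
      rw [Walk.support_eq_cons] at this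
      exact (List.mem_cons.mp this).resolve_left hne
  exact List.count_eq_one_of_mem hnodup hmem

/- ### Part 2: structure of the subdivision graph. -/

variable {G : SimpleGraph V}

lemma sym2_rep (f : Sym2 V) : ∃ u v, f = s(u, v) := by
  induction f with
  | _ u v => exact ⟨u, v, rfl⟩

lemma sym2_eq_of_mem {f : Sym2 V} {u v : V} (hu : u ∈ f) (hv : v ∈ f) (hne : u ≠ v) :
    f = s(u, v) := by
  induction f with
  | _ a b =>
    rw [Sym2.mem_iff] at hu hv
    rcases hu with rfl | rfl <;> rcases hv with rfl | rfl <;> first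
      | exact absurd rfl hne
      | simp [Sym2.eq_swap]
      | rfl

lemma subdivision_adj {x y : V ⊕ G.edgeSet} :
    (subdivision G).Adj x y ↔
      (∃ (u : V) (e : G.edgeSet), u ∈ (e : Sym2 V) ∧
        ((x = Sum.inl u ∧ y = Sum.inr e) ∨ (x = Sum.inr e ∧ y = Sum.inl u))) := by
  constructor
  · rcases x with u | e <;> rcases y with w | f <;> intro h
    · exact absurd h (by simp [subdivision])
    · exact ⟨u, f, h, Or.inl ⟨rfl, rfl⟩⟩
    · exact ⟨w, e, h, Or.inr ⟨rfl, rfl⟩⟩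
    · exact absurd h (by simp [subdivision])
  · rintro ⟨u, e, hu, ⟨rfl, rfl⟩ | ⟨rfl, rfl⟩⟩ <;> exact hu

lemma mem_subdivision_edgeSet {f : Sym2 (V ⊕ G.edgeSet)} (hf : f ∈ (subdivision G).edgeSet) :
    ∃ (u : V) (e : G.edgeSet), u ∈ (e : Sym2 V) ∧ f = s(Sum.inl u, Sum.inr e) := by
  induction f with
  | _ p q =>
    rw [SimpleGraph.mem_edgeSet] at hf
    rw [subdivision_adj] at hf
    obtain ⟨u, e, hu, ⟨rfl, rfl⟩ | ⟨rfl, rfl⟩⟩ := hf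
    · exact ⟨u, e, hu, rfl⟩
    · exact ⟨u, e, hu, Sym2.eq_swap⟩

variable [Fintype V] [DecidableEq V] [DecidableRel G.Adj]

lemma incidenceFinset_inr (e : G.edgeSet) {u v : V}
    (huv : (e : Sym2 V) = s(u, v)) :
    (subdivision G).incidenceFinset (Sum.inr e) =
      {s(Sum.inl u, Sum.inr e), s(Sum.inl v, Sum.inr e)} := by
  ext f
  rw [SimpleGraph.mem_incidenceFinset]
  constructor
  · rintro ⟨hf, hmem⟩
    obtain ⟨w, e', hw, rfl⟩ := mem_subdivision_edgeSet hf
    have he' : e' = e := by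
      rw [Sym2.mem_iff] at hmem
      rcases hmem with h | h
      · exact absurd h (by simp)
      · exact (Sum.inr.inj h).symm
    subst he'
    rw [huv, Sym2.mem_iff] at hw
    rcases hw with rfl | rfl <;> simp
  · intro hf
    simp only [Finset.mem_insert, Finset.mem_singleton] at hf
    rcases hf with rfl | rfl
    · refine ⟨?_, by simp⟩
      rw [SimpleGraph.mem_edgeSet, subdivision_adj]
      exact ⟨u, e, by rw [huv]; simp, Or.inl ⟨rfl, rfl⟩⟩
    · refine ⟨?_, by simp⟩
      rw [SimpleGraph.mem_edgeSet, subdivision_adj]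
      exact ⟨v, e, by rw [huv]; simp, Or.inl ⟨rfl, rfl⟩⟩

lemma sum_incidenceFinset_inr (x : Sym2 (V ⊕ G.edgeSet) → ℕ)
    (e : G.edgeSet) {u v : V} (huv : (e : Sym2 V) = s(u, v)) (hne : u ≠ v) :
    ∑ f ∈ (subdivision G).incidenceFinset (Sum.inr e), x f =
      x s(Sum.inl u, Sum.inr e) + x s(Sum.inl v, Sum.inr e) := by
  rw [incidenceFinset_inr e huv, Finset.sum_insert (by simp [Sym2.eq_iff, hne]),
    Finset.sum_singleton]

set_option linter.unusedSectionVars false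

lemma incidenceFinset_inl (u : V) :
    (subdivision G).incidenceFinset (Sum.inl u) =
      Finset.image (fun e : G.edgeSet => s(Sum.inl u, Sum.inr e))
        (Finset.univ.filter fun e : G.edgeSet => u ∈ (e : Sym2 V)) := by
  ext f
  rw [SimpleGraph.mem_incidenceFinset]
  constructor
  · rintro ⟨hf, hmem⟩
    obtain ⟨w, e', hw, rfl⟩ := mem_subdivision_edgeSet hf
    have hwu : w = u := by
      rw [Sym2.mem_iff] at hmem
      rcases hmem with h | h
      · exact (Sum.inl.inj h).symm
      · exact absurd h (by simp)
    subst hwu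
    simp only [Finset.mem_image, Finset.mem_filter, Finset.mem_univ, true_and]
    exact ⟨e', hw, rfl⟩
  · intro hf
    simp only [Finset.mem_image, Finset.mem_filter, Finset.mem_univ, true_and] at hf
    obtain ⟨e, he, rfl⟩ := hf
    refine ⟨?_, by simp⟩
    rw [SimpleGraph.mem_edgeSet, subdivision_adj]
    exact ⟨u, e, he, Or.inl ⟨rfl, rfl⟩⟩

lemma edgeFinset_eq_biUnion :
    (subdivision G).edgeFinset =
      Finset.univ.biUnion (fun e : G.edgeSet =>
        (subdivision G).incidenceFinset (Sum.inr e)) := by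
  ext f
  simp only [Finset.mem_biUnion, Finset.mem_univ, true_and,
    SimpleGraph.mem_edgeFinset, SimpleGraph.mem_incidenceFinset]
  constructor
  · intro hf
    obtain ⟨w, e', hw, rfl⟩ := mem_subdivision_edgeSet hf
    exact ⟨e', hf, by simp⟩
  · rintro ⟨e, hf, -⟩
    exact hf

lemma sum_edgeFinset_eq (x : Sym2 (V ⊕ G.edgeSet) → ℕ) :
    ∑ f ∈ (subdivision G).edgeFinset, x f =
      ∑ e : G.edgeSet, ∑ f ∈ (subdivision G).incidenceFinset (Sum.inr e), x f := by
  rw [edgeFinset_eq_biUnion, Finset.sum_biUnion]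
  intro e1 _ e2 _ hne
  simp only [Finset.disjoint_left]
  intro f h1 h2
  rw [SimpleGraph.mem_incidenceFinset] at h1 h2
  obtain ⟨w, e', hw, rfl⟩ := mem_subdivision_edgeSet h1.1
  have k1 : e1 = e' := by
    have := h1.2; rw [Sym2.mem_iff] at this
    rcases this with h | h
    · exact absurd h (by simp)
    · exact Sum.inr.inj h
  have k2 : e2 = e' := by
    have := h2.2; rw [Sym2.mem_iff] at this
    rcases this with h | h
    · exact absurd h (by simp)
    · exact Sum.inr.inj h
  exact hne (k1.trans k2.symm)

/- ### Part 3: the crossing graph. -/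

/-- The graph on `V` consisting of the edges of `G` that the tour genuinely crosses. -/
def crossGraph (G : SimpleGraph V) (x : Sym2 (V ⊕ G.edgeSet) → ℕ) : SimpleGraph V where
  Adj u v := ∃ e : G.edgeSet, (e : Sym2 V) = s(u, v) ∧
    0 < x s(Sum.inl u, Sum.inr e) ∧ 0 < x s(Sum.inl v, Sum.inr e)
  symm := ⟨by
    rintro u v ⟨e, he, h1, h2⟩
    exact ⟨e, by rw [he, Sym2.eq_swap], h2, h1⟩⟩
  loopless := ⟨by
    rintro u ⟨e, he, -, -⟩
    exact G.loopless.irrefl u (by rw [← SimpleGraph.mem_edgeSet, ← he]; exact e.2)⟩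

lemma crossGraph_le (x : Sym2 (V ⊕ G.edgeSet) → ℕ) : crossGraph G x ≤ G := by
  rintro u v ⟨e, he, -, -⟩
  rw [← SimpleGraph.mem_edgeSet, ← he]; exact e.2

lemma crossGraph_connected (x : Sym2 (V ⊕ G.edgeSet) → ℕ) [Nonempty V]
    (hK : (SimpleGraph.fromEdgeSet
      {f : Sym2 (V ⊕ G.edgeSet) | f ∈ (subdivision G).edgeSet ∧ 0 < x f}).Connected) :
    (crossGraph G x).Connected := by
  classical
  set K := SimpleGraph.fromEdgeSet
      {f : Sym2 (V ⊕ G.edgeSet) | f ∈ (subdivision G).edgeSet ∧ 0 < x f} with hKdef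
  have hKadj : ∀ {a b : V ⊕ G.edgeSet}, K.Adj a b →
      ∃ (u : V) (e : G.edgeSet), u ∈ (e : Sym2 V) ∧ 0 < x s(Sum.inl u, Sum.inr e) ∧
        ((a = Sum.inl u ∧ b = Sum.inr e) ∨ (a = Sum.inr e ∧ b = Sum.inl u)) := by
    intro a b hab
    rw [hKdef, SimpleGraph.fromEdgeSet_adj] at hab
    obtain ⟨⟨hedge, hpos⟩, -⟩ := hab
    rw [SimpleGraph.mem_edgeSet, subdivision_adj] at hedge
    obtain ⟨u, e, hu, ⟨rfl, rfl⟩ | ⟨rfl, rfl⟩⟩ := hedge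
    · exact ⟨u, e, hu, hpos, Or.inl ⟨rfl, rfl⟩⟩
    · exact ⟨u, e, hu, by rwa [Sym2.eq_swap] at hpos, Or.inr ⟨rfl, rfl⟩⟩
  have key : ∀ (y z : V ⊕ G.edgeSet) (q : K.Walk y z) (u w : V),
      (y = Sum.inl u ∨ ∃ e : G.edgeSet, y = Sum.inr e ∧ u ∈ (e : Sym2 V) ∧
        0 < x s(Sum.inl u, Sum.inr e)) →
      z = Sum.inl w → (crossGraph G x).Reachable u w := by
    intro y z q
    induction q with
    | nil =>
      rintro u w (rfl | ⟨e, he, -, -⟩) hw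
      · rw [Sum.inl.inj hw]
      · rw [he] at hw; exact absurd hw (by simp)
    | @cons c1 c2 c3 hadj q ih =>
      rintro u w hy rfl
      obtain ⟨u', e', hu', hpos', hcase⟩ := hKadj hadj
      rcases hy with rfl | ⟨e, rfl, hue, hpos⟩
      · -- y = inl u, so y' must be inr e' with u' = u
        rcases hcase with ⟨h1, rfl⟩ | ⟨h1, -⟩
        · have huu : u' = u := Sum.inl.inj h1.symm
          subst huu
          exact ih u' w (Or.inr ⟨e', rfl, hu', hpos'⟩) rfl
        · exact absurd h1 (by simp)
      · -- y = inr e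
        rcases hcase with ⟨h1, -⟩ | ⟨h1, rfl⟩
        · exact absurd h1 (by simp)
        · have he' : e' = e := Sum.inr.inj h1.symm
          subst he'
          have hreach : (crossGraph G x).Reachable u' w :=
            ih u' w (Or.inl rfl) rfl
          rcases eq_or_ne u u' with rfl | hne
          · exact hreach
          · have hadjH : (crossGraph G x).Adj u u' :=
              ⟨e', sym2_eq_of_mem hue hu' hne, hpos, hpos'⟩
          -- combine
            exact (SimpleGraph.Adj.reachable hadjH).trans hreach
  constructor
  intro u w
  obtain ⟨q⟩ := hK.preconnected (Sum.inl u) (Sum.inl w)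
  exact key _ _ q u w (Or.inl rfl) rfl

end NonHamAux

/-- if a finite 3-regular connected simple graph `G` has no Hamiltonian
cycle, then every GTSP tour `x` on the subdivision `G'` of `G` has total edge weight at
least `2|E| + 2`. -/
theorem non_hamiltonian_tour_lower_bound {V : Type*} [Fintype V] [DecidableEq V]
    (G : SimpleGraph V) [DecidableRel G.Adj]
    (hreg : ∀ v : V, G.degree v = 3) (hconn : G.Connected)
    (hnotham : ¬ ∃ (v : V) (p : G.Walk v v), p.IsHamiltonianCycle)
    (x : Sym2 (V ⊕ G.edgeSet) → ℕ) (hx : IsGTSPTour (subdivision G) x) :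
    2 * G.edgeFinset.card + 2 ≤ ∑ e ∈ (subdivision G).edgeFinset, x e := by
  classical
  obtain ⟨hsupp, hdeg, hKconn⟩ := hx
  have hVne : Nonempty V := hconn.nonempty
  have hfixI : ∀ (v : V ⊕ G.edgeSet) (F : Fintype ((subdivision G).neighborSet v))
      (D : DecidableEq (V ⊕ G.edgeSet)),
      @SimpleGraph.incidenceFinset _ (subdivision G) v F D =
        (subdivision G).incidenceFinset v := by
    intro v F D
    congr!
  have hfixE : ∀ (F : Fintype ((subdivision G).edgeSet)),
      @SimpleGraph.edgeFinset _ (subdivision G) F = (subdivision G).edgeFinset := by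
    intro F
    congr!
  have hdeg' : ∀ v : V ⊕ G.edgeSet,
      Even (∑ f ∈ (subdivision G).incidenceFinset v, x f) ∧
        0 < ∑ f ∈ (subdivision G).incidenceFinset v, x f := by
    intro v
    obtain ⟨ha, hb⟩ := hdeg v
    rw [hfixI] at ha hb
    exact ⟨ha, hb⟩
  clear hdeg
  have hdeg := hdeg'
  clear hdeg'
  set D : G.edgeSet → ℕ := fun e => ∑ f ∈ (subdivision G).incidenceFinset (Sum.inr e), x f
    with hD
  have hsum : ∑ f ∈ (subdivision G).edgeFinset, x f = ∑ e : G.edgeSet, D e :=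
    NonHamAux.sum_edgeFinset_eq x
  have hD2 : ∀ e, 2 ≤ D e := by
    intro e
    have h1 := (hdeg (Sum.inr e)).1
    have h2 := (hdeg (Sum.inr e)).2
    rcases h1 with ⟨k, hk⟩
    show 2 ≤ ∑ f ∈ (subdivision G).incidenceFinset (Sum.inr e), x f
    omega
  have hDeven : ∀ e, Even (D e) := fun e => (hdeg (Sum.inr e)).1
  have hcard : (Finset.univ : Finset G.edgeSet).card = G.edgeFinset.card := by
    rw [Finset.card_univ, SimpleGraph.edgeFinset, Set.toFinset_card]
  have hge : 2 * G.edgeFinset.card ≤ ∑ f ∈ (subdivision G).edgeFinset, x f := by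
    rw [hsum, ← hcard]
    calc 2 * (Finset.univ : Finset G.edgeSet).card = ∑ _e : G.edgeSet, 2 := by
          rw [Finset.sum_const, smul_eq_mul, mul_comm]
      _ ≤ _ := Finset.sum_le_sum (fun e _ => hD2 e)
  have heven : Even (∑ f ∈ (subdivision G).edgeFinset, x f) := by
    rw [hsum]; exact Finset.even_sum _ (fun e _ => hDeven e)
  have hne0 : ∑ f ∈ (subdivision G).edgeFinset, x f ≠ 2 * G.edgeFinset.card := by
    intro hS
    -- every subdivision vertex has degree exactly 2 in the tour
    have hall : ∀ e : G.edgeSet, D e = 2 := by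
      by_contra hc
      push_neg at hc
      obtain ⟨e0, he0⟩ := hc
      have hlt : ∑ _e : G.edgeSet, 2 < ∑ e : G.edgeSet, D e :=
        Finset.sum_lt_sum (fun e _ => hD2 e)
          ⟨e0, Finset.mem_univ _, lt_of_le_of_ne (hD2 e0) (Ne.symm he0)⟩
      rw [Finset.sum_const, Finset.card_univ, smul_eq_mul] at hlt
      rw [← hsum, hS] at hlt
      rw [Finset.card_univ] at hcard
      omega
    have hep : ∀ e : G.edgeSet, ∃ u v : V, (e : Sym2 V) = s(u, v) ∧ G.Adj u v := by
      intro e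
      obtain ⟨u, v, huv⟩ := NonHamAux.sym2_rep (e : Sym2 V)
      refine ⟨u, v, huv, ?_⟩
      rw [← SimpleGraph.mem_edgeSet, ← huv]; exact e.2
    have hxsum2 : ∀ (e : G.edgeSet) (u v : V), (e : Sym2 V) = s(u, v) →
        x s(Sum.inl u, Sum.inr e) + x s(Sum.inl v, Sum.inr e) = 2 := by
      intro e u v huv
      have hne : u ≠ v := by
        obtain ⟨u', v', h1, h2⟩ := hep e
        rw [huv, Sym2.eq_iff] at h1
        rcases h1 with ⟨rfl, rfl⟩ | ⟨rfl, rfl⟩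
        · exact h2.ne
        · exact h2.ne'
      rw [← NonHamAux.sum_incidenceFinset_inr x e huv hne]
      exact hall e
    set H := NonHamAux.crossGraph G x with hH
    have hHle : H ≤ G := NonHamAux.crossGraph_le x
    have hHconn : H.Connected := NonHamAux.crossGraph_connected x hKconn
    have hadj1 : ∀ u v, H.Adj u v → ∃ e : G.edgeSet, (e : Sym2 V) = s(u, v) ∧
        x s(Sum.inl u, Sum.inr e) = 1 ∧ x s(Sum.inl v, Sum.inr e) = 1 := by
      rintro u v ⟨e, he, h1, h2⟩
      have := hxsum2 e u v he
      exact ⟨e, he, by omega, by omega⟩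
    set I : V → Finset G.edgeSet :=
      fun u => Finset.univ.filter (fun e : G.edgeSet => u ∈ (e : Sym2 V)) with hI
    have hIcard : ∀ u, (I u).card = 3 := by
      intro u
      rw [← hreg u, ← SimpleGraph.card_incidenceFinset_eq_degree]
      apply Finset.card_bij (fun (e : G.edgeSet) _ => (e : Sym2 V))
      · intro e he
        rw [SimpleGraph.mem_incidenceFinset]
        refine ⟨e.2, ?_⟩
        rw [hI] at he
        simpa using he
      · intro e1 h1 e2 h2 h
        exact Subtype.ext h
      · intro f hf
        rw [SimpleGraph.mem_incidenceFinset] at hf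
        exact ⟨⟨f, hf.1⟩, by rw [hI]; simpa using hf.2, rfl⟩
    set C : V → Finset G.edgeSet :=
      fun u => (I u).filter (fun e => x s(Sum.inl u, Sum.inr e) = 1) with hC
    have hxle2 : ∀ (u : V) (e : G.edgeSet), u ∈ (e : Sym2 V) →
        x s(Sum.inl u, Sum.inr e) ≤ 2 := by
      intro u e hu
      obtain ⟨v, hv⟩ := Sym2.mem_iff_exists.mp hu
      have := hxsum2 e u v hv
      omega
    have hCeven : ∀ u, Even (C u).card := by
      intro u
      have hdg := (hdeg (Sum.inl u)).1
      rw [NonHamAux.incidenceFinset_inl u, Finset.sum_image ?hinj] at hdg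
      case hinj =>
        intro e1 h1 e2 h2 h
        rw [Sym2.eq_iff] at h
        rcases h with ⟨-, h⟩ | ⟨h, -⟩
        · exact Sum.inr.inj h
        · exact absurd h (by simp)
      have hdg2 : Even (∑ e ∈ I u, x s(Sum.inl u, Sum.inr e)) := hdg
      clear hdg
      have hdg := hdg2
      rw [← Finset.sum_filter_add_sum_filter_not (I u)
        (fun e => x s(Sum.inl u, Sum.inr e) = 1)] at hdg
      have hc1 : ∑ e ∈ (I u).filter (fun e => x s(Sum.inl u, Sum.inr e) = 1),
          x s(Sum.inl u, Sum.inr e) = (C u).card := by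
        rw [hC]
        rw [Finset.sum_congr rfl (fun e he => (Finset.mem_filter.mp he).2)]
        simp
      have hc2 : Even (∑ e ∈ (I u).filter (fun e => ¬ x s(Sum.inl u, Sum.inr e) = 1),
          x s(Sum.inl u, Sum.inr e)) := by
        refine Finset.even_sum _ (fun e he => ?_)
        rw [Finset.mem_filter] at he
        have hmem : u ∈ (e : Sym2 V) := by
          have := he.1; rw [hI] at this; simpa using this
        have h2 := hxle2 u e hmem
        have h1 := he.2
        have : x s(Sum.inl u, Sum.inr e) = 0 ∨ x s(Sum.inl u, Sum.inr e) = 2 := by omega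
        rcases this with h | h <;> rw [h] <;> decide
      rw [hc1] at hdg
      exact (Nat.even_add.mp hdg).mpr hc2
    have hCpos : ∀ u, (C u).Nonempty := by
      intro u
      have h3 : 0 < G.degree u := by rw [hreg]; norm_num
      obtain ⟨w0, hw0⟩ := (G.degree_pos_iff_exists_adj u).mp h3
      obtain ⟨p⟩ := hHconn.preconnected u w0
      have hune : u ≠ w0 := hw0.ne
      have hpnil : ¬ p.Nil := by
        intro h
        cases p with
        | nil => exact hune rfl
        | cons h' q => simp at h
      obtain ⟨s', hs', q, -⟩ := SimpleGraph.Walk.not_nil_iff.mp hpnil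
      obtain ⟨e, he, h1, h2⟩ := hadj1 u s' hs'
      refine ⟨e, ?_⟩
      rw [hC, Finset.mem_filter]
      refine ⟨?_, h1⟩
      rw [hI]
      simp [he]
    have hC2 : ∀ u, (C u).card = 2 := by
      intro u
      have h1 := hCeven u
      have h3 : (C u).card ≤ 3 := by
        rw [← hIcard u]; exact Finset.card_le_card (Finset.filter_subset _ _)
      have h4 : 0 < (C u).card := Finset.card_pos.mpr (hCpos u)
      rcases h1 with ⟨k, hk⟩
      omega
    have hmemC : ∀ (u : V) (e : G.edgeSet), e ∈ C u →
        u ∈ (e : Sym2 V) ∧ x s(Sum.inl u, Sum.inr e) = 1 := by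
      intro u e he
      rw [hC, Finset.mem_filter, hI] at he
      refine ⟨by simpa using he.1, he.2⟩
    have hndeg : ∀ u, (H.neighborSet u).ncard = 2 := by
      intro u
      obtain ⟨e1, e2, hee, hCeq⟩ := Finset.card_eq_two.mp (hC2 u)
      have he1 : e1 ∈ C u := by rw [hCeq]; simp
      have he2 : e2 ∈ C u := by rw [hCeq]; simp
      obtain ⟨hu1, hx1⟩ := hmemC u e1 he1
      obtain ⟨hu2, hx2⟩ := hmemC u e2 he2
      obtain ⟨w1, hw1⟩ := Sym2.mem_iff_exists.mp hu1
      obtain ⟨w2, hw2⟩ := Sym2.mem_iff_exists.mp hu2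
      have hadjw1 : H.Adj u w1 := by
        have := hxsum2 e1 u w1 hw1
        exact ⟨e1, hw1, by omega, by omega⟩
      have hadjw2 : H.Adj u w2 := by
        have := hxsum2 e2 u w2 hw2
        exact ⟨e2, hw2, by omega, by omega⟩
      have hw12 : w1 ≠ w2 := by
        rintro rfl
        exact hee (Subtype.ext (hw1.trans hw2.symm))
      have hseteq : H.neighborSet u = {w1, w2} := by
        ext w
        simp only [SimpleGraph.mem_neighborSet, Set.mem_insert_iff, Set.mem_singleton_iff]
        constructor
        · intro hadj
          obtain ⟨e, he, h1, h2⟩ := hadj1 u w hadj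
          have heC : e ∈ C u := by
            rw [hC, Finset.mem_filter, hI]
            exact ⟨by simp [he], h1⟩
          rw [hCeq] at heC
          simp only [Finset.mem_insert, Finset.mem_singleton] at heC
          rcases heC with rfl | rfl
          · left
            have h := hw1.symm.trans he
            rw [Sym2.eq_iff] at h
            rcases h with ⟨-, h⟩ | ⟨h, -⟩
            · exact h.symm
            · exact absurd h hadj.ne
          · right
            have h := hw2.symm.trans he
            rw [Sym2.eq_iff] at h
            rcases h with ⟨-, h⟩ | ⟨h, -⟩
            · exact h.symm
            · exact absurd h hadj.ne
        · rintro (rfl | rfl)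
          exacts [hadjw1, hadjw2]
      rw [hseteq]
      exact Set.ncard_pair hw12
    obtain ⟨a, c, hcham⟩ := NonHamAux.two_regular_connected_ham hHconn hndeg
    exact hnotham ⟨a, c.map (SimpleGraph.Hom.ofLE hHle),
      hcham.map (f := SimpleGraph.Hom.ofLE hHle) Function.bijective_id⟩
  rcases heven with ⟨k, hk⟩
  omega
end
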